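/- Let D, x ∈ Mₖ(ℂ) with D hermitian, let s ∈ ℝ, g ≥ 0, κ ≥ 0, and suppose that ([[s·1, x],[x*, s·1]])² ≥ g²·1 in the Loewner order on M_{2k}(ℂ). Then the generalized spectral localizer satisfies L_κ(D,x,s)² ≥ (g² − κ·‖[D,x]‖)·1 in the Loewner order on M_{4k}(ℂ). -/

import Mathlib

open Matrix
open scoped Matrix.Norms.L2Operator ComplexOrder InnerProductSpace


noncomputable def en {m : Type*} [Fintype m] (u : m → ℂ) : ℝ :=
  ‖(WithLp.equiv 2 (m → ℂ)).symm u‖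

lemma en_nonneg {m : Type*} [Fintype m] (u : m → ℂ) : 0 ≤ en u := norm_nonneg _

lemma star_dot_self {m : Type*} [Fintype m] (u : m → ℂ) :
    star u ⬝ᵥ u = ((en u ^ 2 : ℝ) : ℂ) := by
  rw [dotProduct_comm, ← EuclideanSpace.inner_toLp_toLp, inner_self_eq_norm_sq_to_K]
  push_cast
  rfl

lemma en_bound {m n : Type*} [Fintype m] [Fintype n] [DecidableEq m] [DecidableEq n] (M : Matrix m n ℂ)
    (u : m → ℂ) (v : n → ℂ) :
    ‖star u ⬝ᵥ M *ᵥ v‖ ≤ ‖M‖ * en u * en v := by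
  rw [dotProduct_comm, ← EuclideanSpace.inner_toLp_toLp]
  calc ‖⟪(WithLp.equiv 2 (m → ℂ)).symm u, (WithLp.equiv 2 (m → ℂ)).symm (M *ᵥ v)⟫_ℂ‖
      ≤ ‖(WithLp.equiv 2 (m → ℂ)).symm u‖ * ‖(WithLp.equiv 2 (m → ℂ)).symm (M *ᵥ v)‖ :=
        by simpa using norm_inner_le_norm (𝕜 := ℂ) ((WithLp.equiv 2 (m → ℂ)).symm u) ((WithLp.equiv 2 (m → ℂ)).symm (M *ᵥ v))
    _ ≤ en u * (‖M‖ * en v) := by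
        refine mul_le_mul_of_nonneg_left ?_ (norm_nonneg _)
        exact M.l2_opNorm_mulVec ((WithLp.equiv 2 (n → ℂ)).symm v)
    _ = ‖M‖ * en u * en v := by ring

lemma star_elim {m n : Type*} (a : m → ℂ) (b : n → ℂ) :
    star (Sum.elim a b) = Sum.elim (star a) (star b) := by
  funext i; rcases i with i | i <;> rfl

lemma en_sum_sq {m n : Type*} [Fintype m] [Fintype n] (a : m → ℂ) (b : n → ℂ) :
    en (Sum.elim a b) ^ 2 = en a ^ 2 + en b ^ 2 := by
  simp only [en, EuclideanSpace.norm_eq]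
  rw [Real.sq_sqrt (by positivity), Real.sq_sqrt (by positivity),
    Real.sq_sqrt (by positivity)]
  · exact Fintype.sum_sum_type _

lemma my_fromBlocks_sub {l m n o : Type*} (A A' : Matrix n l ℂ) (B B' : Matrix n m ℂ)
    (C C' : Matrix o l ℂ) (D D' : Matrix o m ℂ) :
    Matrix.fromBlocks A B C D - Matrix.fromBlocks A' B' C' D'
      = Matrix.fromBlocks (A - A') (B - B') (C - C') (D - D') := by
  rw [sub_eq_add_neg, Matrix.fromBlocks_neg, Matrix.fromBlocks_add]
  simp [sub_eq_add_neg]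

lemma posSemidef_blockDiag {m n : Type*} [Fintype m] [Fintype n]
    {A : Matrix m m ℂ} {B : Matrix n n ℂ} (hA : A.PosSemidef) (hB : B.PosSemidef) :
    (Matrix.fromBlocks A 0 0 B).PosSemidef := by
  refine posSemidef_iff_dotProduct_mulVec.mpr ⟨?_, ?_⟩
  · unfold Matrix.IsHermitian
    rw [fromBlocks_conjTranspose]
    simp [hA.1.eq, hB.1.eq]
  · intro z
    rw [← Sum.elim_comp_inl_inr z]
    rw [fromBlocks_mulVec, star_elim]
    simp only [zero_mulVec, add_zero, zero_add, sumElim_dotProduct_sumElim]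
    exact add_nonneg (hA.dotProduct_mulVec_nonneg _) (hB.dotProduct_mulVec_nonneg _)

lemma posSemidef_corner {m n : Type*} [Fintype m] [Fintype n] [DecidableEq m] [DecidableEq n]
    (c : ℝ) (M : Matrix m n ℂ)
    (hM : ∀ (u : m → ℂ) (v : n → ℂ),
      2 * ‖star u ⬝ᵥ M *ᵥ v‖ ≤ c * (en u ^ 2 + en v ^ 2)) :
    (Matrix.fromBlocks ((c : ℂ) • 1) M Mᴴ ((c : ℂ) • 1)).PosSemidef := by
  refine posSemidef_iff_dotProduct_mulVec.mpr ⟨?_, ?_⟩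
  · unfold Matrix.IsHermitian
    rw [fromBlocks_conjTranspose]
    simp [conjTranspose_smul, Complex.star_def, Complex.conj_ofReal]
  · intro z
    rw [← Sum.elim_comp_inl_inr z]
    set u := z ∘ Sum.inl with hu
    set v := z ∘ Sum.inr with hv
    rw [fromBlocks_mulVec, star_elim, sumElim_dotProduct_sumElim]
    simp only [Sum.elim_comp_inl, Sum.elim_comp_inr]
    have hsmul1 : ((c : ℂ) • (1 : Matrix m m ℂ)) *ᵥ u = (c : ℂ) • u := by
      rw [smul_mulVec, one_mulVec]
    have hsmul2 : ((c : ℂ) • (1 : Matrix n n ℂ)) *ᵥ v = (c : ℂ) • v := by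
      rw [smul_mulVec, one_mulVec]
    rw [hsmul1, hsmul2]
    rw [dotProduct_add, dotProduct_add, dotProduct_smul, dotProduct_smul]
    set w := star u ⬝ᵥ M *ᵥ v with hw
    have hconj : star v ⬝ᵥ Mᴴ *ᵥ u = starRingEnd ℂ w := by
      rw [star_dotProduct, star_mulVec, conjTranspose_conjTranspose, ← dotProduct_mulVec]
      rfl
    rw [hconj, star_dot_self, star_dot_self]
    have key : (c : ℂ) • ((en u ^ 2 : ℝ) : ℂ) + w + (starRingEnd ℂ w + (c : ℂ) • ((en v ^ 2 : ℝ) : ℂ))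
        = ((c * en u ^ 2 + c * en v ^ 2 + 2 * w.re : ℝ) : ℂ) := by
      rw [smul_eq_mul, smul_eq_mul]
      have : w + starRingEnd ℂ w = ((2 * w.re : ℝ) : ℂ) := by
        rw [Complex.add_conj]
      push_cast
      push_cast at this
      linear_combination this
    rw [key, Complex.zero_le_real]
    have h1 := hM u v
    have h2 : -‖w‖ ≤ w.re := (abs_le.1 (Complex.abs_re_le_norm w)).1
    nlinarith [norm_nonneg w]

/-- The generalized spectral localizer `L_κ(D,x,s)`: the hermitian `4k × 4k` complex
matrix with `k × k` blocks
`[[s·1, x, κD, 0], [x*, s·1, 0, κD], [κD, 0, -s·1, -x], [0, κD, -x*, -s·1]]`. -/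
noncomputable def localizer {k : ℕ} (D x : Matrix (Fin k) (Fin k) ℂ) (κ s : ℝ) :
    Matrix ((Fin k ⊕ Fin k) ⊕ (Fin k ⊕ Fin k)) ((Fin k ⊕ Fin k) ⊕ (Fin k ⊕ Fin k)) ℂ :=
  Matrix.fromBlocks
    (Matrix.fromBlocks ((s : ℂ) • 1) x xᴴ ((s : ℂ) • 1))
    (Matrix.fromBlocks ((κ : ℂ) • D) 0 0 ((κ : ℂ) • D))
    (Matrix.fromBlocks ((κ : ℂ) • D) 0 0 ((κ : ℂ) • D))
    (Matrix.fromBlocks (-(s : ℂ) • 1) (-x) (-xᴴ) (-(s : ℂ) • 1))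

/-- If `([[s·1, x],[x*, s·1]])² ≥ g²·1` in the Loewner order, then
`L_κ(D,x,s)² ≥ (g² - κ·‖[D,x]‖)·1` in the Loewner order, where `‖·‖` is the
`ℓ²`-operator norm. -/
theorem localizer_sq_lower_bound {k : ℕ} (D x : Matrix (Fin k) (Fin k) ℂ)
    (hD : D.IsHermitian) (s : ℝ) (g : ℝ) (hg : 0 ≤ g) (κ : ℝ) (hκ : 0 ≤ κ)
    (h : ((Matrix.fromBlocks ((s : ℂ) • 1) x xᴴ ((s : ℂ) • 1)) ^ 2
        - ((g ^ 2 : ℝ) : ℂ) • 1).PosSemidef) :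
    ((localizer D x κ s) ^ 2
        - ((g ^ 2 - κ * ‖D * x - x * D‖ : ℝ) : ℂ) • 1).PosSemidef := by
  set H := Matrix.fromBlocks ((s : ℂ) • 1) x xᴴ ((s : ℂ) • 1) with hH
  set K := Matrix.fromBlocks ((κ : ℂ) • D) 0 0 ((κ : ℂ) • D) with hK
  set C := D * x - x * D with hC
  set t := ‖C‖ with ht
  -- basic hermitian facts
  have hHh : Hᴴ = H := by
    rw [hH, fromBlocks_conjTranspose]
    simp [conjTranspose_smul, Complex.star_def, Complex.conj_ofReal]
  have hKh : Kᴴ = K := by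
    rw [hK, fromBlocks_conjTranspose]
    simp [conjTranspose_smul, Complex.star_def, Complex.conj_ofReal, hD.eq]
  have hL : localizer D x κ s = Matrix.fromBlocks H K K (-H) := by
    rw [localizer, hH, hK, fromBlocks_neg]
    simp [neg_smul]
  have hB : H * K - K * H
      = Matrix.fromBlocks 0 (-((κ : ℂ) • C)) ((κ : ℂ) • Cᴴ) 0 := by
    rw [hH, hK, hC, fromBlocks_multiply, fromBlocks_multiply, my_fromBlocks_sub, conjTranspose_sub, conjTranspose_mul, conjTranspose_mul, hD.eq]
    rw [fromBlocks_inj]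
    refine ⟨?_, ?_, ?_, ?_⟩ <;>
      · simp only [Matrix.smul_mul, Matrix.mul_smul, Matrix.mul_zero, Matrix.zero_mul,
          Matrix.mul_one, Matrix.one_mul, add_zero, zero_add, smul_zero, neg_zero]
        module
  have key : (localizer D x κ s) ^ 2 - ((g ^ 2 - κ * t : ℝ) : ℂ) • 1
      = Matrix.fromBlocks (H ^ 2 - ((g ^ 2 : ℝ) : ℂ) • 1) 0 0 (H ^ 2 - ((g ^ 2 : ℝ) : ℂ) • 1)
        + Matrix.fromBlocks (Kᴴ * K) 0 0 (Kᴴ * K)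
        + Matrix.fromBlocks (((κ * t : ℝ) : ℂ) • 1) (H * K - K * H)
            ((H * K - K * H)ᴴ) (((κ * t : ℝ) : ℂ) • 1) := by
    have hone : ∀ (a : ℂ), a • (1 : Matrix ((Fin k ⊕ Fin k) ⊕ (Fin k ⊕ Fin k))
        ((Fin k ⊕ Fin k) ⊕ (Fin k ⊕ Fin k)) ℂ)
        = Matrix.fromBlocks (a • 1) 0 0 (a • 1) := by
      intro a
      rw [← fromBlocks_one, fromBlocks_smul, smul_zero]
    rw [hL, pow_two, fromBlocks_multiply, hone, my_fromBlocks_sub, fromBlocks_add,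
      fromBlocks_add, conjTranspose_sub, conjTranspose_mul, conjTranspose_mul,
      hHh, hKh]
    rw [fromBlocks_inj]
    have hg2 : ((g ^ 2 - κ * t : ℝ) : ℂ) = ((g ^ 2 : ℝ) : ℂ) - ((κ * t : ℝ) : ℂ) := by push_cast; ring
    refine ⟨?_, ?_, ?_, ?_⟩
    · rw [hg2, sub_smul, pow_two H]; abel
    · simp only [Matrix.mul_neg, neg_zero, add_zero, zero_add, sub_zero, smul_zero]
      abel
    · simp only [Matrix.neg_mul, neg_zero, add_zero, zero_add, sub_zero, smul_zero]
      abel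
    · rw [hg2, sub_smul, pow_two H]
      simp only [Matrix.neg_mul, Matrix.mul_neg, neg_neg]
      abel
  rw [key]
  refine ((posSemidef_blockDiag h h).add (posSemidef_blockDiag
    (posSemidef_conjTranspose_mul_self K) (posSemidef_conjTranspose_mul_self K))).add
    (posSemidef_corner _ _ ?_)
  intro u v
  rw [hB]
  rw [← Sum.elim_comp_inl_inr u, ← Sum.elim_comp_inl_inr v, fromBlocks_mulVec, star_elim,
    sumElim_dotProduct_sumElim]
  simp only [Sum.elim_comp_inl, Sum.elim_comp_inr, zero_mulVec, add_zero, zero_add,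
    Matrix.neg_mulVec, smul_mulVec, dotProduct_neg, dotProduct_smul, smul_eq_mul]
  set u1 := u ∘ Sum.inl
  set u2 := u ∘ Sum.inr
  set v1 := v ∘ Sum.inl
  set v2 := v ∘ Sum.inr
  set w1 := star u1 ⬝ᵥ C *ᵥ v2 with hw1d
  set w2 := star u2 ⬝ᵥ Cᴴ *ᵥ v1 with hw2d
  have habs : ‖-((κ : ℂ) * w1) + (κ : ℂ) * w2‖
      ≤ κ * ‖w1‖ + κ * ‖w2‖ := by
    refine (norm_add_le _ _).trans ?_
    rw [norm_neg]
    simp [norm_mul, abs_of_nonneg hκ]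
  have hb1 : ‖w1‖ ≤ t * en u1 * en v2 := en_bound C u1 v2
  have hb2 : ‖w2‖ ≤ t * en u2 * en v1 := by
    have := en_bound Cᴴ u2 v1
    rwa [Matrix.l2_opNorm_conjTranspose] at this
  rw [en_sum_sq, en_sum_sq]
  nlinarith [sq_nonneg (en u1 - en v2), sq_nonneg (en u2 - en v1), en_nonneg u1, en_nonneg u2,
    en_nonneg v1, en_nonneg v2, norm_nonneg w1, norm_nonneg w2,
    mul_nonneg hκ (norm_nonneg C), norm_nonneg C]
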